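/- Let d ≥ 1 and let μ and ν be probability measures on ℝ^d with μ absolutely continuous with respect to Lebesgue measure. If φ₁ and φ₂ are convex functions on ℝ^d, each differentiable μ-almost everywhere, such that both (∇φ₁)_#μ = ν and (∇φ₂)_#μ = ν, then ∇φ₁(x) = ∇φ₂(x) for μ-almost every x. -/

import Mathlib

open MeasureTheory Set
open scoped RealInnerProductSpace

variable {E : Type*} [NormedAddCommGroup E] [InnerProductSpace ℝ E] [CompleteSpace E]

lemma mccann_hasDerivAt_line (φ : E → ℝ) {x : E} (hx : DifferentiableAt ℝ φ x) (v : E) :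
    HasDerivAt (fun t : ℝ => φ (x + t • v)) ⟪gradient φ x, v⟫ 0 := by
  have h := hx.hasGradientAt.hasFDerivAt
  have hline : HasDerivAt (fun t : ℝ => x + t • v) v 0 := by
    simpa using ((hasDerivAt_id (0 : ℝ)).smul_const v).const_add x
  have h2 : HasFDerivAt φ (InnerProductSpace.toDual ℝ E (gradient φ x)) (x + (0:ℝ) • v) := by
    simpa using h
  have := h2.comp_hasDerivAt 0 hline
  rw [InnerProductSpace.toDual_apply_apply] at this
  exact this

lemma mccann_slope_tendsto (φ : E → ℝ) {x : E} (hx : DifferentiableAt ℝ φ x) (v : E) :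
    Filter.Tendsto (fun t : ℝ => (φ (x + t • v) - φ x) / t) (nhdsWithin 0 (Ioi 0))
      (nhds ⟪gradient φ x, v⟫) := by
  have h := (hasDerivAt_iff_tendsto_slope.1 (mccann_hasDerivAt_line φ hx v))
  have hsub : nhdsWithin (0:ℝ) (Ioi 0) ≤ nhdsWithin 0 {(0:ℝ)}ᶜ :=
    nhdsWithin_mono _ (fun t ht => ne_of_gt ht)
  have := h.mono_left hsub
  refine this.congr (fun t => ?_)
  simp [slope_def_field]

lemma mccann_grad_le {φ : E → ℝ} (hφ : ConvexOn ℝ univ φ) {x : E}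
    (hx : DifferentiableAt ℝ φ x) (z : E) :
    φ x + ⟪gradient φ x, z - x⟫ ≤ φ z := by
  have key : ⟪gradient φ x, z - x⟫ ≤ φ z - φ x := by
    refine le_of_tendsto (mccann_slope_tendsto φ hx (z - x)) ?_
    filter_upwards [Ioc_mem_nhdsGT_of_mem (Set.left_mem_Ico.2 one_pos)] with t ht
    have h1 : φ (x + t • (z - x)) ≤ (1 - t) * φ x + t * φ z := by
      have := hφ.2 (mem_univ x) (mem_univ z) (by linarith [ht.2] : (0:ℝ) ≤ 1 - t)
        (le_of_lt ht.1) (by ring)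
      calc φ (x + t • (z - x)) = φ ((1 - t) • x + t • z) := by
            congr 1; module
        _ ≤ (1 - t) * φ x + t * φ z := this
    rw [div_le_iff₀ ht.1]
    nlinarith [ht.1]
  linarith

lemma mccann_subgrad_eq {φ : E → ℝ} {x : E}
    (hx : DifferentiableAt ℝ φ x) {y : E} (hy : ∀ z, φ x + ⟪y, z - x⟫ ≤ φ z) :
    y = gradient φ x := by
  have key : ∀ v : E, ⟪y, v⟫ ≤ ⟪gradient φ x, v⟫ := by
    intro v
    refine ge_of_tendsto (mccann_slope_tendsto φ hx v) ?_
    filter_upwards [self_mem_nhdsWithin] with t (ht : t ∈ Ioi (0:ℝ))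
    have := hy (x + t • v)
    have h2 : ⟪y, (x + t • v) - x⟫ = t * ⟪y, v⟫ := by
      simp [real_inner_smul_right]
    rw [le_div_iff₀ ht]
    rw [h2] at this
    linarith
  have h3 : ∀ v : E, ⟪y - gradient φ x, v⟫ ≤ 0 := by
    intro v
    have := key v
    rw [inner_sub_left]
    linarith
  have h4 := h3 (y - gradient φ x)
  have h5 : y - gradient φ x = 0 := by
    have := real_inner_self_nonneg (x := y - gradient φ x)
    have h6 : ⟪y - gradient φ x, y - gradient φ x⟫ = 0 := le_antisymm h4 this
    exact inner_self_eq_zero.1 h6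
  rwa [sub_eq_zero] at h5

noncomputable def mccannConj (φ : E → ℝ) (y : E) : EReal :=
  ⨆ x : E, ((⟪x, y⟫ - φ x : ℝ) : EReal)

lemma mccann_young (φ : E → ℝ) (x y : E) :
    ((⟪x, y⟫ - φ x : ℝ) : EReal) ≤ mccannConj φ y :=
  le_iSup (fun x => ((⟪x, y⟫ - φ x : ℝ) : EReal)) x

lemma mccann_conj_ne_bot (φ : E → ℝ) (y : E) : mccannConj φ y ≠ ⊥ :=
  fun h => by simpa [h] using mccann_young φ 0 y

lemma mccann_conj_grad [CompleteSpace E] {φ : E → ℝ} (hφ : ConvexOn ℝ univ φ) {x : E}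
    (hx : DifferentiableAt ℝ φ x) :
    mccannConj φ (gradient φ x) = ((⟪x, gradient φ x⟫ - φ x : ℝ) : EReal) := by
  refine le_antisymm (iSup_le fun z => ?_) (mccann_young φ x _)
  rw [EReal.coe_le_coe_iff]
  have h := mccann_grad_le hφ hx z
  have h2 : ⟪gradient φ x, z - x⟫ = ⟪z, gradient φ x⟫ - ⟪x, gradient φ x⟫ := by
    rw [inner_sub_right, real_inner_comm]
    congr 1
    exact real_inner_comm _ _
  linarith [h, h2.symm ▸ h]

lemma mccann_conj_measurable [SecondCountableTopology E] [MeasurableSpace E] [BorelSpace E]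
    {φ : E → ℝ} (hφc : Continuous φ) : Measurable (mccannConj φ) := by
  have : Nonempty E := ⟨0⟩
  set D := TopologicalSpace.denseSeq E with hD
  have hdense := TopologicalSpace.denseRange_denseSeq E
  have key : mccannConj φ = fun y => ⨆ n : ℕ, ((⟪D n, y⟫ - φ (D n) : ℝ) : EReal) := by
    funext y
    refine le_antisymm (iSup_le fun x => ?_) (iSup_le fun n => mccann_young φ (D n) y)
    by_contra hcon
    push_neg at hcon
    obtain ⟨r, hr1, hr2⟩ := EReal.exists_between_coe_real hcon
    have hU : IsOpen {z : E | r < ⟪z, y⟫ - φ z} := by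
      have : Continuous fun z : E => ⟪z, y⟫ - φ z := by
        exact ((continuous_id.inner continuous_const)).sub hφc
      exact isOpen_lt continuous_const this
    have hne : {z : E | r < ⟪z, y⟫ - φ z}.Nonempty :=
      ⟨x, by exact_mod_cast hr2⟩
    obtain ⟨n, hn⟩ := hdense.exists_mem_open hU hne
    have : ((r : ℝ) : EReal) < ((⟪D n, y⟫ - φ (D n) : ℝ) : EReal) := by
      exact_mod_cast hn
    exact absurd ((le_iSup (fun n : ℕ => ((⟪D n, y⟫ - φ (D n) : ℝ) : EReal)) n)) 
      (fun hle => (hr1.trans_le (this.le.trans hle)).false)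
  rw [key]
  exact Measurable.iSup fun n => measurable_coe_real_ereal.comp
    ((continuous_const.inner continuous_id).sub continuous_const).measurable


lemma mccann_ae_eq_of_le_of_map_eq {α : Type*} [MeasurableSpace α] (μ : Measure α)
    [IsFiniteMeasure μ] {X Y : α → ℝ} (hX : AEMeasurable X μ) (hY : AEMeasurable Y μ)
    (hle : ∀ᵐ ω ∂μ, X ω ≤ Y ω) (hmap : μ.map X = μ.map Y) :
    ∀ᵐ ω ∂μ, X ω = Y ω := by
  -- replace by measurable versions
  obtain ⟨X', hX'm, hX'⟩ := hX
  obtain ⟨Y', hY'm, hY'⟩ := hY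
  have hmap' : μ.map X' = μ.map Y' := by
    rw [← Measure.map_congr hX', ← Measure.map_congr hY', hmap]
  have hle' : ∀ᵐ ω ∂μ, X' ω ≤ Y' ω := by
    filter_upwards [hle, hX', hY'] with ω h1 h2 h3
    rw [← h2, ← h3]; exact h1
  suffices h : ∀ᵐ ω ∂μ, X' ω = Y' ω by
    filter_upwards [h, hX', hY'] with ω h1 h2 h3
    rw [h2, h3]; exact h1
  have key : ∀ q : ℚ, μ ({ω | X' ω ≤ q} \ {ω | Y' ω ≤ q}) = 0 := by
    intro q
    set A := {ω | X' ω ≤ (q : ℝ)} with hA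
    set B := {ω | Y' ω ≤ (q : ℝ)} with hB
    have hAm : MeasurableSet A := hX'm measurableSet_Iic
    have hBm : MeasurableSet B := hY'm measurableSet_Iic
    have hμeq : μ A = μ B := by
      have h1 : μ A = (μ.map X') (Iic (q : ℝ)) := by
        rw [Measure.map_apply hX'm measurableSet_Iic]; rfl
      have h2 : μ B = (μ.map Y') (Iic (q : ℝ)) := by
        rw [Measure.map_apply hY'm measurableSet_Iic]; rfl
      rw [h1, h2, hmap']
    have hBA : μ (B \ A) = 0 := by
      apply measure_eq_zero_iff_ae_notMem.mpr
      filter_upwards [hle'] with ω h1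
      rintro ⟨hb, ha⟩
      exact ha (le_trans h1 hb)
    -- μ A = μ (A ∩ B) + μ (A \ B), μ B = μ (A ∩ B) + μ (B \ A)
    have h3 : μ A = μ (A ∩ B) + μ (A \ B) := (measure_inter_add_diff A hBm).symm
    have h4 : μ B = μ (B ∩ A) + μ (B \ A) := (measure_inter_add_diff B hAm).symm
    rw [hBA, add_zero, Set.inter_comm] at h4
    rw [h4] at hμeq
    have hfin : μ (A ∩ B) ≠ ⊤ := (measure_lt_top μ _).ne
    have h5 : μ (A ∩ B) + μ (A \ B) = μ (A ∩ B) + 0 := by rw [add_zero, ← h3, hμeq]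
    exact (ENNReal.add_right_inj hfin).mp h5
  have hall : ∀ᵐ ω ∂μ, ∀ q : ℚ, ω ∉ ({ω | X' ω ≤ (q:ℝ)} \ {ω | Y' ω ≤ (q:ℝ)}) :=
    (MeasureTheory.ae_all_iff).2 fun q => measure_eq_zero_iff_ae_notMem.mp (key q)
  filter_upwards [hall, hle'] with ω h1 h2
  by_contra hne
  have hlt : X' ω < Y' ω := lt_of_le_of_ne h2 hne
  obtain ⟨q, hq1, hq2⟩ := exists_rat_btwn hlt
  exact h1 q ⟨hq1.le, not_le.2 hq2⟩


section Main

open scoped RealInnerProductSpace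

set_option maxHeartbeats 1000000 in
theorem mccann_uniqueness (d : ℕ) (hd : 1 ≤ d)
    (μ ν : Measure (EuclideanSpace ℝ (Fin d)))
    [IsProbabilityMeasure μ] [IsProbabilityMeasure ν]
    (hμ : μ ≪ volume)
    (φ₁ φ₂ : EuclideanSpace ℝ (Fin d) → ℝ)
    (hφ₁ : ConvexOn ℝ Set.univ φ₁) (hφ₂ : ConvexOn ℝ Set.univ φ₂)
    (hd₁ : ∀ᵐ x ∂μ, DifferentiableAt ℝ φ₁ x)
    (hd₂ : ∀ᵐ x ∂μ, DifferentiableAt ℝ φ₂ x)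
    (hpush₁ : μ.map (fun x => gradient φ₁ x) = ν)
    (hpush₂ : μ.map (fun x => gradient φ₂ x) = ν) :
    ∀ᵐ x ∂μ, gradient φ₁ x = gradient φ₂ x := by
  classical
  set T₁ : EuclideanSpace ℝ (Fin d) → EuclideanSpace ℝ (Fin d) := fun x => gradient φ₁ x
    with hT₁def
  set T₂ : EuclideanSpace ℝ (Fin d) → EuclideanSpace ℝ (Fin d) := fun x => gradient φ₂ x
    with hT₂def
  have hT₁ : AEMeasurable T₁ μ := by
    by_contra h
    rw [Measure.map_of_not_aemeasurable h] at hpush₁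
    exact (IsProbabilityMeasure.ne_zero ν) hpush₁.symm
  have hT₂ : AEMeasurable T₂ μ := by
    by_contra h
    rw [Measure.map_of_not_aemeasurable h] at hpush₂
    exact (IsProbabilityMeasure.ne_zero ν) hpush₂.symm
  have hc₁ : Continuous φ₁ := by
    rw [← continuousOn_univ]; exact hφ₁.continuousOn isOpen_univ
  have hc₂ : Continuous φ₂ := by
    rw [← continuousOn_univ]; exact hφ₂.continuousOn isOpen_univ
  set u : EuclideanSpace ℝ (Fin d) → EReal := mccannConj φ₁ with hudef
  set v : EuclideanSpace ℝ (Fin d) → EReal := mccannConj φ₂ with hvdef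
  have hu : Measurable u := mccann_conj_measurable hc₁
  have hv : Measurable v := mccann_conj_measurable hc₂
  have hYe₁ : ∀ᵐ x ∂μ, u (T₁ x) = ((⟪x, T₁ x⟫ - φ₁ x : ℝ) : EReal) := by
    filter_upwards [hd₁] with x hx
    exact mccann_conj_grad hφ₁ hx
  have hYe₂ : ∀ᵐ x ∂μ, v (T₂ x) = ((⟪x, T₂ x⟫ - φ₂ x : ℝ) : EReal) := by
    filter_upwards [hd₂] with x hx
    exact mccann_conj_grad hφ₂ hx
  set N : Set (EuclideanSpace ℝ (Fin d)) := u ⁻¹' {⊤} ∪ v ⁻¹' {⊤} with hNdef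
  have hNm : MeasurableSet N :=
    (hu (measurableSet_singleton ⊤)).union (hv (measurableSet_singleton ⊤))
  have hνN : ν N = 0 := by
    rw [← hpush₁]
    have h1 : (μ.map T₁) (u ⁻¹' {⊤}) = 0 := by
      rw [Measure.map_apply_of_aemeasurable hT₁ (hu (measurableSet_singleton ⊤))]
      apply measure_eq_zero_iff_ae_notMem.mpr
      filter_upwards [hYe₁] with x hx
      intro hmem
      have htop : u (T₁ x) = ⊤ := hmem
      rw [hx] at htop
      exact EReal.coe_ne_top _ htop
    have h2 : (μ.map T₁) (v ⁻¹' {⊤}) = 0 := by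
      rw [hpush₁, ← hpush₂]
      rw [Measure.map_apply_of_aemeasurable hT₂ (hv (measurableSet_singleton ⊤))]
      apply measure_eq_zero_iff_ae_notMem.mpr
      filter_upwards [hYe₂] with x hx
      intro hmem
      have htop : v (T₂ x) = ⊤ := hmem
      rw [hx] at htop
      exact EReal.coe_ne_top _ htop
    exact le_antisymm (le_trans (measure_union_le _ _) (by rw [h1, h2, add_zero])) zero_le
  have hmem₁ : ∀ᵐ x ∂μ, T₁ x ∉ N := by
    have hpre : μ (T₁ ⁻¹' N) = 0 := by
      rw [← Measure.map_apply_of_aemeasurable hT₁ hNm, hpush₁]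
      exact hνN
    filter_upwards [measure_eq_zero_iff_ae_notMem.mp hpre] with x hx
    exact hx
  have hmem₂ : ∀ᵐ x ∂μ, T₂ x ∉ N := by
    have hpre : μ (T₂ ⁻¹' N) = 0 := by
      rw [← Measure.map_apply_of_aemeasurable hT₂ hNm, hpush₂]
      exact hνN
    filter_upwards [measure_eq_zero_iff_ae_notMem.mp hpre] with x hx
    exact hx
  set h : EuclideanSpace ℝ (Fin d) → ℝ :=
    fun y => if y ∈ N then 0 else (u y).toReal - (v y).toReal with hhdef
  have hhm : Measurable h := by
    apply Measurable.ite hNm measurable_const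
    exact (measurable_ereal_toReal.comp hu).sub (measurable_ereal_toReal.comp hv)
  have hmapX : μ.map (h ∘ T₁) = μ.map (h ∘ T₂) := by
    rw [← AEMeasurable.map_map_of_aemeasurable hhm.aemeasurable hT₁,
        ← AEMeasurable.map_map_of_aemeasurable hhm.aemeasurable hT₂, hpush₁, hpush₂]
  have hub : ∀ y : EuclideanSpace ℝ (Fin d), u y ≠ ⊥ := mccann_conj_ne_bot φ₁
  have hvb : ∀ y : EuclideanSpace ℝ (Fin d), v y ≠ ⊥ := mccann_conj_ne_bot φ₂
  have hle : ∀ᵐ x ∂μ, (h ∘ T₁) x ≤ (h ∘ T₂) x := by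
    filter_upwards [hYe₁, hYe₂, hmem₁, hmem₂] with x he₁ he₂ hm₁ hm₂
    have hut₂ : u (T₂ x) ≠ ⊤ := fun hc => hm₂ (Set.mem_union_left _ (show _ ∈ u ⁻¹' {⊤} from hc))
    have hvt₁ : v (T₁ x) ≠ ⊤ := fun hc => hm₁ (Set.mem_union_right _ (show _ ∈ v ⁻¹' {⊤} from hc))
    have hA : ⟪x, T₂ x⟫ - φ₁ x ≤ (u (T₂ x)).toReal := by
      have hy : ((⟪x, T₂ x⟫ - φ₁ x : ℝ) : EReal) ≤ u (T₂ x) := mccann_young φ₁ x (T₂ x)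
      rw [← EReal.coe_toReal hut₂ (hub _)] at hy
      exact EReal.coe_le_coe_iff.1 hy
    have hB : ⟪x, T₁ x⟫ - φ₂ x ≤ (v (T₁ x)).toReal := by
      have hy : ((⟪x, T₁ x⟫ - φ₂ x : ℝ) : EReal) ≤ v (T₁ x) := mccann_young φ₂ x (T₁ x)
      rw [← EReal.coe_toReal hvt₁ (hvb _)] at hy
      exact EReal.coe_le_coe_iff.1 hy
    have ha₁ : (u (T₁ x)).toReal = ⟪x, T₁ x⟫ - φ₁ x := by rw [he₁]; exact EReal.toReal_coe _
    have hb₂ : (v (T₂ x)).toReal = ⟪x, T₂ x⟫ - φ₂ x := by rw [he₂]; exact EReal.toReal_coe _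
    simp only [Function.comp_apply, hhdef, if_neg hm₁, if_neg hm₂]
    rw [ha₁, hb₂]
    linarith
  have heq := mccann_ae_eq_of_le_of_map_eq μ (hhm.comp_aemeasurable hT₁)
    (hhm.comp_aemeasurable hT₂) hle hmapX
  filter_upwards [hYe₁, hYe₂, hmem₁, hmem₂, heq, hd₁] with x he₁ he₂ hm₁ hm₂ hEq hdx₁
  have hut₂ : u (T₂ x) ≠ ⊤ := fun hc => hm₂ (Set.mem_union_left _ (show _ ∈ u ⁻¹' {⊤} from hc))
  have hvt₁ : v (T₁ x) ≠ ⊤ := fun hc => hm₁ (Set.mem_union_right _ (show _ ∈ v ⁻¹' {⊤} from hc))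
  have hA : ⟪x, T₂ x⟫ - φ₁ x ≤ (u (T₂ x)).toReal := by
    have hy : ((⟪x, T₂ x⟫ - φ₁ x : ℝ) : EReal) ≤ u (T₂ x) := mccann_young φ₁ x (T₂ x)
    rw [← EReal.coe_toReal hut₂ (hub _)] at hy
    exact EReal.coe_le_coe_iff.1 hy
  have hB : ⟪x, T₁ x⟫ - φ₂ x ≤ (v (T₁ x)).toReal := by
    have hy : ((⟪x, T₁ x⟫ - φ₂ x : ℝ) : EReal) ≤ v (T₁ x) := mccann_young φ₂ x (T₁ x)
    rw [← EReal.coe_toReal hvt₁ (hvb _)] at hy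
    exact EReal.coe_le_coe_iff.1 hy
  have ha₁ : (u (T₁ x)).toReal = ⟪x, T₁ x⟫ - φ₁ x := by rw [he₁]; exact EReal.toReal_coe _
  have hb₂ : (v (T₂ x)).toReal = ⟪x, T₂ x⟫ - φ₂ x := by rw [he₂]; exact EReal.toReal_coe _
  have hEq' : h (T₁ x) = h (T₂ x) := hEq
  simp only [hhdef, if_neg hm₁, if_neg hm₂] at hEq'
  rw [ha₁, hb₂] at hEq'
  have hAeq : (u (T₂ x)).toReal = ⟪x, T₂ x⟫ - φ₁ x := by linarith
  have hsub : ∀ z, φ₁ x + ⟪T₂ x, z - x⟫ ≤ φ₁ z := by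
    intro z
    have hy : ((⟪z, T₂ x⟫ - φ₁ z : ℝ) : EReal) ≤ u (T₂ x) := mccann_young φ₁ z (T₂ x)
    rw [← EReal.coe_toReal hut₂ (hub _), hAeq] at hy
    have h2 := EReal.coe_le_coe_iff.1 hy
    have h3 : ⟪T₂ x, z - x⟫ = ⟪z, T₂ x⟫ - ⟪x, T₂ x⟫ := by
      rw [inner_sub_right, real_inner_comm]
      congr 1
      exact real_inner_comm _ _
    linarith
  exact (mccann_subgrad_eq hdx₁ hsub).symm

end Main
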